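/- Let M be a matroid on a finite ground set U and let w : U → ℝ be a nonnegative weight function. Suppose A is a basis of M of maximum total weight. Then for every basis B of M there exists a bijection g : B → A such that for every y ∈ B the set (A \ {g(y)}) ∪ {y} is a basis of M and w(g(y)) ≥ w(y). -/

import Mathlib

open Classical

/-- A matroid on a finite ground set `α`, given by its independent sets. -/
structure FinMatroid (α : Type*) [DecidableEq α] [Fintype α] where
  /-- The independent sets. -/
  Indep : Finset α → Prop
  indep_empty : Indep ∅
  indep_subset : ∀ ⦃I J : Finset α⦄, Indep J → I ⊆ J → Indep I
  indep_exchange : ∀ ⦃I J : Finset α⦄, Indep I → Indep J → I.card < J.card →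
    ∃ e ∈ J, e ∉ I ∧ Indep (insert e I)

namespace FinMatroid

variable {α : Type*} [DecidableEq α] [Fintype α]

/-- A basis of the matroid: a maximal independent set. -/
def Base (M : FinMatroid α) (B : Finset α) : Prop :=
  M.Indep B ∧ ∀ e : α, e ∉ B → ¬ M.Indep (insert e B)

/-- The rank of a set: the size of a largest independent subset. -/
noncomputable def rank (M : FinMatroid α) (S : Finset α) : ℕ :=
  (S.powerset.filter M.Indep).sup Finset.card

/-- The span of a set: the elements whose insertion does not increase the rank. -/
noncomputable def span (M : FinMatroid α) (S : Finset α) : Finset α :=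
  Finset.univ.filter fun e => M.rank (insert e S) = M.rank S

end FinMatroid

namespace FinMatroid

variable {α : Type*} [DecidableEq α] [Fintype α] (M : FinMatroid α)

lemma card_le_rank {I S : Finset α} (hI : M.Indep I) (hIS : I ⊆ S) : I.card ≤ M.rank S :=
  Finset.le_sup (Finset.mem_filter.mpr ⟨Finset.mem_powerset.mpr hIS, hI⟩)

lemma exists_rank (S : Finset α) : ∃ I, I ⊆ S ∧ M.Indep I ∧ I.card = M.rank S := by
  have hne : (S.powerset.filter M.Indep).Nonempty :=
    ⟨∅, Finset.mem_filter.mpr ⟨Finset.mem_powerset.mpr (Finset.empty_subset S), M.indep_empty⟩⟩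
  obtain ⟨I, hI, hIc⟩ := Finset.exists_mem_eq_sup _ hne Finset.card
  simp only [Finset.mem_filter, Finset.mem_powerset] at hI
  exact ⟨I, hI.1, hI.2, hIc.symm⟩

lemma maximal_rank {I S : Finset α} (hI : M.Indep I) (hIS : I ⊆ S)
    (hmax : ∀ e ∈ S, e ∉ I → ¬ M.Indep (insert e I)) : I.card = M.rank S := by
  refine le_antisymm (M.card_le_rank hI hIS) ?_
  by_contra h
  push_neg at h
  obtain ⟨J, hJS, hJ, hJc⟩ := M.exists_rank S
  obtain ⟨e, heJ, heI, hins⟩ := M.indep_exchange hI hJ (by omega)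
  exact hmax e (hJS heJ) heI hins

lemma rank_indep {I : Finset α} (hI : M.Indep I) : M.rank I = I.card :=
  (M.maximal_rank hI (subset_refl I) (fun e he he' _ => he' he)).symm

lemma exists_extend {I S : Finset α} (hI : M.Indep I) (hIS : I ⊆ S) :
    ∃ J, I ⊆ J ∧ J ⊆ S ∧ M.Indep J ∧ J.card = M.rank S := by
  have key : ∀ n (I : Finset α), M.Indep I → I ⊆ S → S.card - I.card ≤ n →
      ∃ J, I ⊆ J ∧ J ⊆ S ∧ M.Indep J ∧ J.card = M.rank S := by
    intro n
    induction n with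
    | zero =>
      intro I hI hIS hc
      have hEq : I = S := Finset.eq_of_subset_of_card_le hIS (by omega)
      subst hEq
      exact ⟨I, subset_refl I, hIS, hI, M.maximal_rank hI hIS (fun e he he' _ => he' he)⟩
    | succ n ih =>
      intro I hI hIS hc
      by_cases hm : ∀ e ∈ S, e ∉ I → ¬ M.Indep (insert e I)
      · exact ⟨I, subset_refl I, hIS, hI, M.maximal_rank hI hIS hm⟩
      · push_neg at hm
        obtain ⟨e, heS, heI, hind⟩ := hm
        obtain ⟨J, hIJ, hJS, hJ, hJc⟩ := ih (insert e I) hind (Finset.insert_subset heS hIS)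
          (by have := Finset.card_insert_of_notMem heI; omega)
        exact ⟨J, (Finset.subset_insert e I).trans hIJ, hJS, hJ, hJc⟩
  exact key (S.card - I.card) I hI hIS le_rfl

lemma rank_mono {S T : Finset α} (h : S ⊆ T) : M.rank S ≤ M.rank T := by
  obtain ⟨I, hIS, hI, hc⟩ := M.exists_rank S
  rw [← hc]; exact M.card_le_rank hI (hIS.trans h)

lemma rank_insert_eq_of {e : α} {T T' : Finset α} (hTT' : T ⊆ T')
    (h : M.rank (insert e T) = M.rank T) : M.rank (insert e T') = M.rank T' := by
  by_cases heT' : e ∈ T'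
  · rw [Finset.insert_eq_self.mpr heT']
  obtain ⟨I₀, hI₀T, hI₀, hI₀c⟩ := M.exists_rank T
  obtain ⟨I, hI₀I, hIT', hIind, hIc⟩ := M.exists_extend hI₀ (hI₀T.trans hTT')
  rw [← hIc]
  refine (M.maximal_rank hIind (hIT'.trans (Finset.subset_insert e T')) ?_).symm
  intro f hf hfI hfind
  rcases Finset.mem_insert.mp hf with rfl | hfT'
  · have heI₀ : f ∉ I₀ := fun hc => heT' (hTT' (hI₀T hc))
    have : M.Indep (insert f I₀) :=
      M.indep_subset hfind (Finset.insert_subset_insert f hI₀I)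
    have hle : (insert f I₀).card ≤ M.rank (insert f T) :=
      M.card_le_rank this (Finset.insert_subset_insert f hI₀T)
    rw [Finset.card_insert_of_notMem heI₀, h] at hle
    omega
  · have hle : (insert f I).card ≤ M.rank T' :=
      M.card_le_rank hfind (Finset.insert_subset hfT' hIT')
    rw [Finset.card_insert_of_notMem hfI] at hle
    omega

lemma rank_union_eq {S T : Finset α} (h : ∀ e ∈ S, M.rank (insert e T) = M.rank T) :
    M.rank (S ∪ T) = M.rank T := by
  induction S using Finset.induction_on with
  | empty => rw [Finset.empty_union]
  | insert a s ha ih =>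
    rw [Finset.insert_union,
      M.rank_insert_eq_of Finset.subset_union_right (h a (Finset.mem_insert_self a s))]
    exact ih (fun e he => h e (Finset.mem_insert_of_mem he))

lemma base_card_le {X Y : Finset α} (hX : M.Base X) (hY : M.Base Y) : X.card ≤ Y.card := by
  by_contra h
  push_neg at h
  obtain ⟨e, heX, heY, hind⟩ := M.indep_exchange hY.1 hX.1 h
  exact hY.2 e heY hind

lemma base_card_eq {X Y : Finset α} (hX : M.Base X) (hY : M.Base Y) : X.card = Y.card :=
  le_antisymm (M.base_card_le hX hY) (M.base_card_le hY hX)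

lemma base_of_indep_card {A W : Finset α} (hA : M.Base A) (hW : M.Indep W)
    (hc : W.card = A.card) : M.Base W := by
  refine ⟨hW, fun e he hind => ?_⟩
  obtain ⟨f, hf, hfA, hfind⟩ := M.indep_exchange hA.1 hind
    (by rw [Finset.card_insert_of_notMem he]; omega)
  exact hA.2 f hfA hfind

lemma rank_insert_base {A : Finset α} (hA : M.Base A) (y : α) :
    M.rank (insert y A) = A.card :=
  (M.maximal_rank hA.1 (Finset.subset_insert y A)
    (fun e _ heA => hA.2 e heA)).symm

lemma circuit_span {A : Finset α} (hA : M.Base A) {y : α} (hy : y ∉ A) :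
    M.rank (insert y (A.filter fun x => M.Base (insert y (A.erase x)))) =
      M.rank (A.filter fun x => M.Base (insert y (A.erase x))) := by
  set D := A.filter fun x => M.Base (insert y (A.erase x)) with hD
  have hDA : D ⊆ A := Finset.filter_subset _ _
  have hDind : M.Indep D := M.indep_subset hA.1 hDA
  by_cases hins : M.Indep (insert y D)
  · exfalso
    have hsub : insert y D ⊆ insert y A := Finset.insert_subset_insert y hDA
    obtain ⟨W, hDW, hWS, hWind, hWc⟩ := M.exists_extend hins hsub
    rw [M.rank_insert_base hA y] at hWc
    have hyW : y ∈ W := hDW (Finset.mem_insert_self _ _)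
    have hWerase : W.erase y ⊆ A := by
      intro x hx
      obtain ⟨hxy, hxW⟩ := Finset.mem_erase.mp hx
      rcases Finset.mem_insert.mp (hWS hxW) with rfl | hxA
      · exact absurd rfl hxy
      · exact hxA
    have hWec : (W.erase y).card = A.card - 1 := by
      rw [Finset.card_erase_of_mem hyW, hWc]
    have hApos : 0 < A.card := by
      rcases Nat.eq_zero_or_pos A.card with h0 | h
      · exfalso
        have : W.card ≠ 0 := Finset.card_ne_zero_of_mem hyW
        omega
      · exact h
    have hss : W.erase y ⊂ A := Finset.ssubset_of_subset_of_ssubset (subset_refl _)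
      (Finset.ssubset_iff_subset_ne.mpr ⟨hWerase, fun hc => by
        rw [hc] at hWec; omega⟩)
    obtain ⟨x, hxA, hxW⟩ := Finset.exists_of_ssubset hss
    have hxy : x ≠ y := fun hc => hy (hc ▸ hxA)
    have hxnW : x ∉ W := fun hc => hxW (Finset.mem_erase.mpr ⟨hxy, hc⟩)
    have hEq : W.erase y = A.erase x := by
      refine Finset.eq_of_subset_of_card_le ?_ ?_
      · intro z hz
        exact Finset.mem_erase.mpr ⟨fun hc => hxW (hc ▸ hz), hWerase hz⟩
      · rw [Finset.card_erase_of_mem hxA, hWec]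
    have hWeq : W = insert y (A.erase x) := by
      rw [← hEq, Finset.insert_erase hyW]
    have hWbase : M.Base W := M.base_of_indep_card hA hWind hWc
    have hxD : x ∈ D := by
      rw [hD, Finset.mem_filter]
      exact ⟨hxA, hWeq ▸ hWbase⟩
    exact hxnW (hDW (Finset.mem_insert_of_mem hxD))
  · have h1 : D.card = M.rank (insert y D) := by
      refine M.maximal_rank hDind (Finset.subset_insert y D) ?_
      intro e he heD hind
      rcases Finset.mem_insert.mp he with rfl | h
      · exact hins hind
      · exact heD h
    rw [← h1, M.rank_indep hDind]

lemma rank_le_card (S : Finset α) : M.rank S ≤ S.card := by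
  obtain ⟨I, hIS, _, hc⟩ := M.exists_rank S
  rw [← hc]; exact Finset.card_le_card hIS

end FinMatroid

/-- Lemma 1 of KW12: if `A` is a maximum-weight basis and `B` is any basis, there is a
bijection `g : B → A` with `A - g(y) + y` a basis and `w (g y) ≥ w y` for all `y ∈ B`. -/
theorem stmt_1 {α : Type*} [DecidableEq α] [Fintype α] (M : FinMatroid α)
    (w : α → ℝ) (hw : ∀ e : α, 0 ≤ w e)
    (A : Finset α) (hA : M.Base A)
    (hAmax : ∀ B' : Finset α, M.Base B' → ∑ e ∈ B', w e ≤ ∑ e ∈ A, w e)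
    (B : Finset α) (hB : M.Base B) :
    ∃ g : B ≃ A,
      ∀ y : B, M.Base (insert (y : α) (A.erase ((g y : α)))) ∧ w y ≤ w (g y) := by
  classical
  set N : {y // y ∈ B \ A} → Finset α :=
    fun y => (A \ B).filter fun x => M.Base (insert (y : α) (A.erase x)) with hN
  have hcardAB : A.card = B.card := M.base_card_eq hA hB
  have hall : ∀ s : Finset {y // y ∈ B \ A}, s.card ≤ (s.biUnion N).card := by
    intro s
    set S : Finset α := s.image Subtype.val with hS
    have hScard : S.card = s.card := Finset.card_image_of_injective s Subtype.val_injective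
    set T : Finset α := s.biUnion N with hT
    have hTA : T ⊆ A \ B := by
      intro x hx
      obtain ⟨y, _, hxy⟩ := Finset.mem_biUnion.mp hx
      exact (Finset.mem_filter.mp hxy).1
    set C : Finset α := A ∩ B with hC
    have hSB : S ⊆ B \ A := by
      intro x hx
      obtain ⟨y, _, rfl⟩ := Finset.mem_image.mp hx
      exact y.2
    have hPB : C ∪ S ⊆ B :=
      Finset.union_subset Finset.inter_subset_right (hSB.trans (Finset.sdiff_subset))
    have hPind : M.Indep (C ∪ S) := M.indep_subset hB.1 hPB
    have hspan : ∀ e ∈ C ∪ S, M.rank (insert e (C ∪ T)) = M.rank (C ∪ T) := by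
      intro e he
      rcases Finset.mem_union.mp he with heC | heS
      · rw [Finset.insert_eq_self.mpr (Finset.mem_union_left _ heC)]
      · have heBA : e ∈ B \ A := hSB heS
        have heA : e ∉ A := (Finset.mem_sdiff.mp heBA).2
        have hDsub : (A.filter fun x => M.Base (insert e (A.erase x))) ⊆ C ∪ T := by
          intro x hx
          obtain ⟨hxA, hxBase⟩ := Finset.mem_filter.mp hx
          by_cases hxB : x ∈ B
          · exact Finset.mem_union_left _ (Finset.mem_inter.mpr ⟨hxA, hxB⟩)
          · refine Finset.mem_union_right _ ?_
            obtain ⟨y', hy's, hy'e⟩ := Finset.mem_image.mp heS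
            refine Finset.mem_biUnion.mpr ⟨y', hy's, ?_⟩
            exact Finset.mem_filter.mpr
              ⟨Finset.mem_sdiff.mpr ⟨hxA, hxB⟩, by rw [show ((y' : α)) = e from hy'e]; exact hxBase⟩
        exact M.rank_insert_eq_of hDsub (M.circuit_span hA heA)
    have hrk : M.rank ((C ∪ S) ∪ (C ∪ T)) = M.rank (C ∪ T) := M.rank_union_eq hspan
    have h1 : (C ∪ S).card ≤ M.rank (C ∪ T) := by
      rw [← hrk]; exact M.card_le_rank hPind Finset.subset_union_left
    have h2 : M.rank (C ∪ T) ≤ C.card + T.card :=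
      (M.rank_le_card _).trans (Finset.card_union_le C T)
    have hdisj : Disjoint C S := by
      rw [Finset.disjoint_left]
      intro x hxC hxS
      exact (Finset.mem_sdiff.mp (hSB hxS)).2 (Finset.mem_inter.mp hxC).1
    have hCS : (C ∪ S).card = C.card + S.card := Finset.card_union_of_disjoint hdisj
    omega
  obtain ⟨f, hfinj, hfmem⟩ := (Finset.all_card_le_biUnion_card_iff_exists_injective N).mp hall
  have hfAB : ∀ y : {y // y ∈ B \ A}, f y ∈ A \ B := fun y => (Finset.mem_filter.mp (hfmem y)).1
  have hfBase : ∀ y : {y // y ∈ B \ A}, M.Base (insert (y.val) (A.erase (f y))) :=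
    fun y => (Finset.mem_filter.mp (hfmem y)).2
  set G : {x // x ∈ B} → {x // x ∈ A} := fun y =>
    if h : (y : α) ∈ A then ⟨(y : α), h⟩
    else ⟨f ⟨(y : α), Finset.mem_sdiff.mpr ⟨y.2, h⟩⟩,
      (Finset.mem_sdiff.mp (hfAB ⟨(y : α), Finset.mem_sdiff.mpr ⟨y.2, h⟩⟩)).1⟩ with hG
  have hGinj : Function.Injective G := by
    intro y1 y2 hEq
    have hval : ((G y1 : α)) = (G y2 : α) := congrArg Subtype.val hEq
    by_cases h1 : (y1 : α) ∈ A <;> by_cases h2 : (y2 : α) ∈ A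
    · apply Subtype.ext
      rw [hG] at hval
      simpa [dif_pos h1, dif_pos h2] using hval
    · exfalso
      rw [hG] at hval
      simp only [dif_pos h1, dif_neg h2] at hval
      have : (y1 : α) ∈ B := y1.2
      rw [hval] at this
      exact (Finset.mem_sdiff.mp (hfAB _)).2 this
    · exfalso
      rw [hG] at hval
      simp only [dif_neg h1, dif_pos h2] at hval
      have : (y2 : α) ∈ B := y2.2
      rw [← hval] at this
      exact (Finset.mem_sdiff.mp (hfAB _)).2 this
    · rw [hG] at hval
      simp only [dif_neg h1, dif_neg h2] at hval
      have := congrArg Subtype.val (hfinj hval)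
      exact Subtype.ext this
  have hGbij : Function.Bijective G := by
    refine (Fintype.bijective_iff_injective_and_card G).mpr ⟨hGinj, ?_⟩
    simp [Fintype.card_coe, hcardAB]
  refine ⟨Equiv.ofBijective G hGbij, ?_⟩
  intro y
  have hgy : ((Equiv.ofBijective G hGbij) y : α) = (G y : α) := rfl
  rw [hgy]
  by_cases h : (y : α) ∈ A
  · have hGval : (G y : α) = (y : α) := by rw [hG]; simp [dif_pos h]
    rw [hGval, Finset.insert_erase h]
    exact ⟨hA, le_refl _⟩
  · set a : {x // x ∈ B \ A} := ⟨(y : α), Finset.mem_sdiff.mpr ⟨y.2, h⟩⟩ with ha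
    have hGval : (G y : α) = f a := by rw [hG]; simp [dif_neg h]; rfl
    rw [hGval]
    have hbase := hfBase a
    have hxA : f a ∈ A := (Finset.mem_sdiff.mp (hfAB a)).1
    refine ⟨hbase, ?_⟩
    have hle := hAmax _ hbase
    have hyE : (y : α) ∉ A.erase (f a) := fun hc => h (Finset.mem_erase.mp hc).2
    rw [Finset.sum_insert hyE, Finset.sum_erase_eq_sub hxA] at hle
    linarith
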